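/- Let z₁, z₂, z₃, z₄ be nonzero null vectors in ℂ^{3,1}, no two of which are complex multiples of one another. Set 𝕏₁ = 𝕏(z₁,z₂,z₃,z₄), 𝕏₂ = 𝕏(z₁,z₃,z₂,z₄), 𝕏₃ = 𝕏(z₂,z₃,z₁,z₄), and assume 𝕏₁, 𝕏₂, 𝕏₃ are all non-real complex numbers. Let 𝔸₁ = 𝔸(z₄,z₃,z₂) and 𝔸₂ = 𝔸(z₃,z₂,z₁). Then 𝔸₁ + 𝔸₂ = arg(conj(𝕏₁)·𝕏₂) and 𝔸₁ − 𝔸₂ = arg(𝕏₃). -/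
import Mathlib


open Complex ComplexConjugate Matrix Polynomial

noncomputable section

abbrev Vec4 := Fin 4 → ℂ
abbrev Mat4 := Matrix (Fin 4) (Fin 4) ℂ

/-- The Hermitian form of signature (3,1):
`⟨z,w⟩ = z₁·conj(w₄) + z₂·conj(w₂) + z₃·conj(w₃) + z₄·conj(w₁)`. -/
def hermForm (z w : Vec4) : ℂ :=
  z 0 * conj (w 3) + z 1 * conj (w 1) + z 2 * conj (w 2) + z 3 * conj (w 0)

/-- The matrix of the Hermitian form. -/
def Hmat : Mat4 := !![0,0,0,1; 0,1,0,0; 0,0,1,0; 1,0,0,0]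

/-- `A ∈ SU(3,1)`: `(conj A)ᵀ H A = H` and `det A = 1`. -/
def isSU31 (A : Mat4) : Prop := Aᴴ * Hmat * A = Hmat ∧ A.det = 1

/-- Koranyi-Riemann cross-ratio. -/
def crossRatio (z1 z2 z3 z4 : Vec4) : ℂ :=
  (hermForm z3 z1 * hermForm z4 z2) / (hermForm z4 z1 * hermForm z3 z2)

/-- No two of the four vectors are complex multiples of one another. -/
def PairwiseNotProp4 (z1 z2 z3 z4 : Vec4) : Prop :=
  (∀ c : ℂ, z1 ≠ c • z2) ∧ (∀ c : ℂ, z1 ≠ c • z3) ∧ (∀ c : ℂ, z1 ≠ c • z4) ∧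
  (∀ c : ℂ, z2 ≠ c • z3) ∧ (∀ c : ℂ, z2 ≠ c • z4) ∧ (∀ c : ℂ, z3 ≠ c • z4)

/-- `u` is a nonzero complex multiple of `v`. -/
def PropNZ (u v : Vec4) : Prop := ∃ c : ℂ, c ≠ 0 ∧ u = c • v

/-- A loxodromic element of SU(3,1), equipped with its eigen-data. -/
structure Lox where
  M : Mat4
  hM : isSU31 M
  r : ℝ
  θ : ℝ
  φ : ℝ
  hr : 1 < r
  a : Vec4
  x : Vec4
  y : Vec4
  rp : Vec4
  hbasis : LinearIndependent ℂ ![a, x, y, rp]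
  ha : M.mulVec a = ((r : ℂ) * Complex.exp ((θ : ℂ) * Complex.I)) • a
  hx : M.mulVec x = Complex.exp ((φ : ℂ) * Complex.I) • x
  hy : M.mulVec y = Complex.exp (-(2*(θ : ℂ)+(φ : ℂ)) * Complex.I) • y
  hrp : M.mulVec rp = ((r : ℂ)⁻¹ * Complex.exp ((θ : ℂ) * Complex.I)) • rp
  hnull_a : hermForm a a = 0
  hnull_r : hermForm rp rp = 0
  hx1 : hermForm x x = 1
  hy1 : hermForm y y = 1

/-- Goldman's eta invariant `η(a,r;x)` for null `a`, `r` and positive `x`. -/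
def etaV (aA rA xB : Vec4) : ℂ :=
  (hermForm aA xB * hermForm xB rA) / (hermForm aA rA * hermForm xB xB)

def eta1 (A B : Lox) : ℂ := etaV A.a A.rp B.x
def eta2 (A B : Lox) : ℂ := etaV A.a A.rp B.y
def nu1 (A B : Lox) : ℂ := etaV B.a B.rp A.x
def nu2 (A B : Lox) : ℂ := etaV B.a B.rp A.y

def X1 (A B : Lox) : ℂ := crossRatio B.a A.a A.rp B.rp
def X2 (A B : Lox) : ℂ := crossRatio B.a A.rp A.a B.rp
def X3 (A B : Lox) : ℂ := crossRatio A.a A.rp B.a B.rp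

def alpha1 (A B : Lox) : ℂ := crossRatio A.rp A.a B.x B.a
def alpha2 (A B : Lox) : ℂ := crossRatio A.rp A.a B.y B.a
def beta1 (A B : Lox) : ℂ := crossRatio B.rp B.a A.x A.a
def beta2 (A B : Lox) : ℂ := crossRatio B.rp B.a A.y A.a

def etaIdx (i : Fin 2) (A B : Lox) : ℂ := if i = 0 then eta1 A B else eta2 A B
def nuIdx (j : Fin 2) (A B : Lox) : ℂ := if j = 0 then nu1 A B else nu2 A B
def alphaIdx (i : Fin 2) (A B : Lox) : ℂ := if i = 0 then alpha1 A B else alpha2 A B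
def betaIdx (j : Fin 2) (A B : Lox) : ℂ := if j = 0 then beta1 A B else beta2 A B

/-- Non-singularity of the eigen-data of a pair of loxodromic elements. -/
def NonSingularV (aA xA yA rA aB xB yB rB : Vec4) : Prop :=
  PairwiseNotProp4 aA rA aB rB ∧
  LinearIndependent ℂ ![aA, rA, aB, rB] ∧
  (etaV aA rA xB ≠ 0 ∨ etaV aA rA yB ≠ 0) ∧
  (etaV aB rB xA ≠ 0 ∨ etaV aB rB yA ≠ 0)

/-- The pair `(A,B)` of loxodromic elements is non-singular. -/
def NonSingular (A B : Lox) : Prop :=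
  NonSingularV A.a A.x A.y A.rp B.a B.x B.y B.rp

/-- trace. -/
def tau (A : Mat4) : ℂ := A.trace

/-- `σ_A = (tr(A)² − tr(A²))/2`. -/
def sigma (A : Mat4) : ℂ := ((A.trace)^2 - (A^2).trace)/2

/-- Cartan's angular invariant. -/
def cartan (z1 z2 z3 : Vec4) : ℝ :=
  Complex.arg (-(hermForm z1 z2 * hermForm z2 z3 * hermForm z3 z1))

/-- The diagonal matrix `E(κ,ψ)`. -/
def Emat (κ : ℂ) (ψ : ℝ) : Mat4 :=
  Matrix.diagonal
    ![Complex.exp κ,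
      Complex.exp (-((ψ : ℂ) * Complex.I) + (conj κ - κ)/2),
      Complex.exp ((ψ : ℂ) * Complex.I + (conj κ - κ)/2),
      Complex.exp (-(conj κ))]

/-- Anti-holomorphic isometric involution `z ↦ M·conj(z)` of `ℂ^{3,1}`. -/
def AntiHolInv (M : Mat4) : Prop :=
  M * (M.map (starRingEnd ℂ)) = 1 ∧
  ∀ z w : Vec4, hermForm (M.mulVec (star z)) (M.mulVec (star w)) = conj (hermForm z w)

lemma herm_conj (z w : Vec4) : conj (hermForm z w) = hermForm w z := by
  simp only [hermForm, map_add, _root_.map_mul, Complex.conj_conj]; ring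

lemma cs3 (x1 x2 x3 y1 y2 y3 : ℂ) :
    normSq (x1 * conj y1 + 2 * (x2 * conj y2) + 2 * (x3 * conj y3)) ≤
      (normSq x1 + 2 * normSq x2 + 2 * normSq x3) *
        (normSq y1 + 2 * normSq y2 + 2 * normSq y3) := by
  set_option maxHeartbeats 1000000 in
  have key : (normSq x1 + 2 * normSq x2 + 2 * normSq x3) *
        (normSq y1 + 2 * normSq y2 + 2 * normSq y3) -
      normSq (x1 * conj y1 + 2 * (x2 * conj y2) + 2 * (x3 * conj y3)) =
      2 * normSq (x1 * y2 - x2 * y1) +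
      2 * normSq (x1 * y3 - x3 * y1) +
      4 * normSq (x2 * y3 - x3 * y2) := by
    simp only [Complex.normSq_apply, Complex.add_re, Complex.add_im, Complex.sub_re,
      Complex.sub_im, Complex.mul_re, Complex.mul_im, Complex.conj_re, Complex.conj_im,
      Complex.re_ofNat, Complex.im_ofNat]
    ring
  nlinarith [Complex.normSq_nonneg (x1 * y2 - x2 * y1),
    Complex.normSq_nonneg (x1 * y3 - x3 * y1),
    Complex.normSq_nonneg (x2 * y3 - x3 * y2)]

lemma perp_null_eq_zero (v P : Vec4) (hv : hermForm v v = 0)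
    (hvP : hermForm v P = 0) (hP : (hermForm P P).re < 0) : v = 0 := by
  set a1 := v 0 + v 3 with ha1
  set d := v 0 - v 3 with hd
  set b1 := P 0 + P 3 with hb1
  set e := P 0 - P 3 with he
  have h1 : normSq a1 + 2 * normSq (v 1) + 2 * normSq (v 2) = normSq d := by
    have : normSq a1 + 2 * normSq (v 1) + 2 * normSq (v 2) - normSq d
        = 2 * (hermForm v v).re := by
      simp only [ha1, hd, hermForm, Complex.normSq_apply, Complex.add_re, Complex.add_im,
        Complex.sub_re, Complex.sub_im, Complex.mul_re, Complex.mul_im,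
        Complex.conj_re, Complex.conj_im]
      ring
    rw [hv] at this; simp at this; linarith
  have h2 : normSq b1 + 2 * normSq (P 1) + 2 * normSq (P 2) < normSq e := by
    have : normSq b1 + 2 * normSq (P 1) + 2 * normSq (P 2) - normSq e
        = 2 * (hermForm P P).re := by
      simp only [hb1, he, hermForm, Complex.normSq_apply, Complex.add_re, Complex.add_im,
        Complex.sub_re, Complex.sub_im, Complex.mul_re, Complex.mul_im,
        Complex.conj_re, Complex.conj_im]
      ring
    linarith
  have h3 : a1 * conj b1 + 2 * (v 1 * conj (P 1)) + 2 * (v 2 * conj (P 2)) = d * conj e := by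
    have : a1 * conj b1 + 2 * (v 1 * conj (P 1)) + 2 * (v 2 * conj (P 2)) - d * conj e
        = 2 * hermForm v P := by
      simp only [ha1, hd, hb1, he, hermForm, map_add, map_sub, _root_.map_mul]
      ring
    rw [hvP] at this
    linear_combination this
  have hcs := cs3 a1 (v 1) (v 2) b1 (P 1) (P 2)
  rw [h3, Complex.normSq_mul, Complex.normSq_conj, h1] at hcs
  have hd0 : normSq d = 0 := by nlinarith [Complex.normSq_nonneg d, Complex.normSq_nonneg e]
  have hdz : d = 0 := by rwa [Complex.normSq_eq_zero] at hd0
  rw [hd0] at h1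
  have hA : a1 = 0 ∧ v 1 = 0 ∧ v 2 = 0 := by
    refine ⟨?_, ?_, ?_⟩ <;> rw [← Complex.normSq_eq_zero] <;>
      nlinarith [Complex.normSq_nonneg a1, Complex.normSq_nonneg (v 1), Complex.normSq_nonneg (v 2)]
  have hv0 : v 0 = 0 := by
    have := hA.1; rw [ha1] at this; rw [hd] at hdz
    linear_combination (this + hdz) / 2
  have hv3 : v 3 = 0 := by
    have := hA.1; rw [ha1] at this; rw [hd] at hdz
    linear_combination (this - hdz) / 2
  funext i
  fin_cases i <;> simp [hv0, hv3, hA.2.1, hA.2.2]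

lemma hermForm_sub_sub_left (a b c : Vec4) (l m : ℂ) (w : Vec4) :
    hermForm (fun i => c i - l * a i - m * b i) w =
      hermForm c w - l * hermForm a w - m * hermForm b w := by
  simp only [hermForm]; ring

lemma hermForm_self_expand (a b c : Vec4) (l m : ℂ) :
    hermForm (fun i => c i - l * a i - m * b i) (fun i => c i - l * a i - m * b i) =
      hermForm c c - conj l * hermForm c a - conj m * hermForm c b
      - l * hermForm a c + l * conj l * hermForm a a + l * conj m * hermForm a b
      - m * hermForm b c + m * conj l * hermForm b a + m * conj m * hermForm b b := by
  simp only [hermForm, map_sub, _root_.map_mul]; ring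

lemma triple_re_nonpos (a b c : Vec4) (ha : a ≠ 0)
    (hna : hermForm a a = 0) (hnb : hermForm b b = 0) (hnc : hermForm c c = 0) :
    (hermForm a b * hermForm b c * hermForm c a).re ≤ 0 := by
  by_cases hs : hermForm a b = 0
  · simp [hs]
  by_contra hT
  push_neg at hT
  have hs' : hermForm b a ≠ 0 := by
    rw [← herm_conj]; simpa using hs
  set T := hermForm a b * hermForm b c * hermForm c a with hTdef
  set l := hermForm c b / hermForm a b with hl
  set m := hermForm c a / hermForm b a with hm
  have hl1 : l * hermForm a b = hermForm c b := by
    rw [hl]; exact div_mul_cancel₀ _ hs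
  have hm1 : m * hermForm b a = hermForm c a := by
    rw [hm]; exact div_mul_cancel₀ _ hs'
  clear_value T l m
  have hQa : hermForm (fun i => c i - l * a i - m * b i) a = 0 := by
    rw [hermForm_sub_sub_left, hna]
    linear_combination -hm1
  have haQ : hermForm a (fun i => c i - l * a i - m * b i) = 0 := by
    rw [← herm_conj, hQa, map_zero]
  have key : hermForm (fun i => c i - l * a i - m * b i) (fun i => c i - l * a i - m * b i) *
      (hermForm a b * hermForm b a) = -(T + conj T) := by
    rw [hermForm_self_expand, hna, hnb, hnc, hTdef]
    simp only [_root_.map_mul, herm_conj]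
    linear_combination (hermForm a b * hermForm b a * conj m - hermForm a c * hermForm b a) * hl1
      + (hermForm a b * hermForm b a * conj l - hermForm a b * hermForm b c) * hm1
  have h2 : hermForm a b * hermForm b a = (normSq (hermForm a b) : ℂ) := by
    rw [← Complex.mul_conj, herm_conj]
  rw [h2] at key
  have hre := congrArg Complex.re key
  simp only [Complex.mul_re, Complex.ofReal_re, Complex.ofReal_im, Complex.neg_re,
    Complex.add_re, Complex.conj_re, mul_zero, sub_zero] at hre
  have hns : 0 < normSq (hermForm a b) := Complex.normSq_pos.mpr hs
  have hQQ : (hermForm (fun i => c i - l * a i - m * b i)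
      (fun i => c i - l * a i - m * b i)).re < 0 := by nlinarith
  exact ha (perp_null_eq_zero a _ hna haQ hQQ)

/-- relations between Cartan angular invariants and the arguments
of the cross-ratios, when all cross-ratios are non-real. -/

theorem cartan_arg_crossRatio (z1 z2 z3 z4 : Vec4)
    (hz1 : z1 ≠ 0) (hz2 : z2 ≠ 0) (hz3 : z3 ≠ 0) (hz4 : z4 ≠ 0)
    (hn1 : hermForm z1 z1 = 0) (hn2 : hermForm z2 z2 = 0)
    (hn3 : hermForm z3 z3 = 0) (hn4 : hermForm z4 z4 = 0)
    (hp : PairwiseNotProp4 z1 z2 z3 z4)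
    (hX1 : (crossRatio z1 z2 z3 z4).im ≠ 0)
    (hX2 : (crossRatio z1 z3 z2 z4).im ≠ 0)
    (hX3 : (crossRatio z2 z3 z1 z4).im ≠ 0) :
    cartan z4 z3 z2 + cartan z3 z2 z1 =
      Complex.arg (conj (crossRatio z1 z2 z3 z4) * crossRatio z1 z3 z2 z4) ∧
    cartan z4 z3 z2 - cartan z3 z2 z1 = Complex.arg (crossRatio z2 z3 z1 z4) := by
  have h41 : hermForm z4 z1 ≠ 0 := fun h => hX1 (by simp [crossRatio, h])
  have h32 : hermForm z3 z2 ≠ 0 := fun h => hX1 (by simp [crossRatio, h])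
  have h31 : hermForm z3 z1 ≠ 0 := fun h => hX1 (by simp [crossRatio, h])
  have h42 : hermForm z4 z2 ≠ 0 := fun h => hX1 (by simp [crossRatio, h])
  have h21 : hermForm z2 z1 ≠ 0 := fun h => hX2 (by simp [crossRatio, h])
  have h43 : hermForm z4 z3 ≠ 0 := fun h => hX2 (by simp [crossRatio, h])
  have h13 : hermForm z1 z3 ≠ 0 := fun h => hX3 (by simp [crossRatio, h])
  have h24 : hermForm z2 z4 ≠ 0 := by rw [← herm_conj]; simpa using h42
  have h23 : hermForm z2 z3 ≠ 0 := by rw [← herm_conj]; simpa using h32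
  have h14 : hermForm z1 z4 ≠ 0 := by rw [← herm_conj]; simpa using h41
  have h12 : hermForm z1 z2 ≠ 0 := by rw [← herm_conj]; simpa using h21
  -- quotient-clearing forms of the cross-ratios
  have e0 : conj (crossRatio z1 z2 z3 z4) * (hermForm z1 z4 * hermForm z2 z3) =
      hermForm z1 z3 * hermForm z2 z4 := by
    rw [crossRatio]
    simp only [map_div₀, _root_.map_mul, herm_conj]
    exact div_mul_cancel₀ _ (mul_ne_zero h14 h23)
  have e1 : crossRatio z1 z3 z2 z4 * (hermForm z4 z1 * hermForm z2 z3) =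
      hermForm z2 z1 * hermForm z4 z3 := by
    rw [crossRatio]
    exact div_mul_cancel₀ _ (mul_ne_zero h41 h23)
  have e3 : crossRatio z2 z3 z1 z4 * (hermForm z4 z2 * hermForm z1 z3) =
      hermForm z1 z2 * hermForm z4 z3 := by
    rw [crossRatio]
    exact div_mul_cancel₀ _ (mul_ne_zero h42 h13)
  have hn41 : ((normSq (hermForm z4 z1) : ℝ) : ℂ) = hermForm z4 z1 * hermForm z1 z4 := by
    rw [← Complex.mul_conj, herm_conj]
  have hn32 : ((normSq (hermForm z3 z2) : ℝ) : ℂ) = hermForm z3 z2 * hermForm z2 z3 := by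
    rw [← Complex.mul_conj, herm_conj]
  have hn42 : ((normSq (hermForm z4 z2) : ℝ) : ℂ) = hermForm z4 z2 * hermForm z2 z4 := by
    rw [← Complex.mul_conj, herm_conj]
  have hn13 : ((normSq (hermForm z1 z3) : ℝ) : ℂ) = hermForm z1 z3 * hermForm z3 z1 := by
    rw [← Complex.mul_conj, herm_conj]
  have id1 : ((normSq (hermForm z4 z1) * normSq (hermForm z3 z2) ^ 2 : ℝ) : ℂ) *
      (conj (crossRatio z1 z2 z3 z4) * crossRatio z1 z3 z2 z4) =
      (-(hermForm z4 z3 * hermForm z3 z2 * hermForm z2 z4)) *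
        (-(hermForm z3 z2 * hermForm z2 z1 * hermForm z1 z3)) := by
    push_cast
    rw [hn41, hn32]
    linear_combination (hermForm z4 z1 * hermForm z2 z3 * (hermForm z3 z2) ^ 2 *
        crossRatio z1 z3 z2 z4) * e0 +
      (hermForm z1 z3 * hermForm z2 z4 * (hermForm z3 z2) ^ 2) * e1
  have id2 : ((normSq (hermForm z4 z2) * normSq (hermForm z1 z3) * normSq (hermForm z3 z2) : ℝ) : ℂ) *
      crossRatio z2 z3 z1 z4 =
      (-(hermForm z4 z3 * hermForm z3 z2 * hermForm z2 z4)) *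
        conj (-(hermForm z3 z2 * hermForm z2 z1 * hermForm z1 z3)) := by
    push_cast
    rw [hn42, hn13, hn32]
    simp only [map_neg, _root_.map_mul, herm_conj]
    linear_combination (hermForm z2 z4 * hermForm z3 z1 * hermForm z3 z2 * hermForm z2 z3) * e3
  set P1 := -(hermForm z4 z3 * hermForm z3 z2 * hermForm z2 z4) with hP1
  set P2 := -(hermForm z3 z2 * hermForm z2 z1 * hermForm z1 z3) with hP2
  have hP1ne : P1 ≠ 0 := by
    rw [hP1]
    exact neg_ne_zero.mpr (mul_ne_zero (mul_ne_zero h43 h32) h24)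
  have hP2ne : P2 ≠ 0 := by
    rw [hP2]
    exact neg_ne_zero.mpr (mul_ne_zero (mul_ne_zero h32 h21) h13)
  have hre1 : 0 ≤ P1.re := by
    have := triple_re_nonpos z4 z3 z2 hz4 hn4 hn3 hn2
    rw [hP1, Complex.neg_re]
    linarith
  have hre2 : 0 ≤ P2.re := by
    have := triple_re_nonpos z3 z2 z1 hz3 hn3 hn2 hn1
    rw [hP2, Complex.neg_re]
    linarith
  have hρ1 : (0:ℝ) < normSq (hermForm z4 z1) * normSq (hermForm z3 z2) ^ 2 :=
    mul_pos (Complex.normSq_pos.mpr h41) (pow_pos (Complex.normSq_pos.mpr h32) 2)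
  have hρ2 : (0:ℝ) < normSq (hermForm z4 z2) * normSq (hermForm z1 z3) * normSq (hermForm z3 z2) :=
    mul_pos (mul_pos (Complex.normSq_pos.mpr h42) (Complex.normSq_pos.mpr h13))
      (Complex.normSq_pos.mpr h32)
  have hstrict : ¬(P1.re = 0 ∧ P2.re = 0) := by
    rintro ⟨q1, q2⟩
    apply hX3
    have him : (P1 * conj P2).im = 0 := by
      simp [Complex.mul_im, Complex.conj_re, Complex.conj_im, q1, q2]
    have h := congrArg Complex.im id2
    rw [him, Complex.mul_im, Complex.ofReal_re, Complex.ofReal_im, zero_mul, add_zero] at h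
    exact (mul_eq_zero.mp h).resolve_left (ne_of_gt hρ2)
  have hb1 : |P1.arg| ≤ Real.pi / 2 := Complex.abs_arg_le_pi_div_two_iff.mpr hre1
  have hb2 : |P2.arg| ≤ Real.pi / 2 := Complex.abs_arg_le_pi_div_two_iff.mpr hre2
  have hb1' := abs_le.mp hb1
  have hb2' := abs_le.mp hb2
  have hr0 : ∀ Q : ℂ, Q ≠ 0 → 0 ≤ Q.re → |Q.arg| = Real.pi / 2 → Q.re = 0 := by
    intro Q hQ hQre habs
    by_contra hne
    have hpos : 0 < Q.re := lt_of_le_of_ne hQre (Ne.symm hne)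
    have := Complex.abs_arg_lt_pi_div_two_iff.mpr (Or.inl hpos)
    rw [habs] at this
    exact lt_irrefl _ this
  constructor
  · -- sum
    have hsum : P1.arg + P2.arg ∈ Set.Ioc (-Real.pi) Real.pi := by
      constructor
      · rcases lt_or_ge (-Real.pi) (P1.arg + P2.arg) with h | h
        · exact h
        · exfalso
          have e1' : P1.arg = -(Real.pi / 2) := by linarith
          have e2' : P2.arg = -(Real.pi / 2) := by linarith
          exact hstrict ⟨hr0 P1 hP1ne hre1 (by rw [e1', abs_neg, _root_.abs_of_nonneg (by positivity)]),
            hr0 P2 hP2ne hre2 (by rw [e2', abs_neg, _root_.abs_of_nonneg (by positivity)])⟩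
      · linarith
    have hmul : (P1 * P2).arg = P1.arg + P2.arg := Complex.arg_mul hP1ne hP2ne hsum
    have : cartan z4 z3 z2 = P1.arg := by rw [cartan, hP1]
    rw [this]
    have : cartan z3 z2 z1 = P2.arg := by rw [cartan, hP2]
    rw [this, ← hmul, ← id1, Complex.arg_real_mul _ hρ1]
  · -- difference
    have hc2 : (conj P2).arg = -P2.arg := by
      rw [Complex.arg_conj, if_neg]
      intro h
      rw [h, _root_.abs_of_nonneg Real.pi_pos.le] at hb2
      linarith [Real.pi_pos]
    have hcne : conj P2 ≠ 0 := by simpa using hP2ne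
    have hsum : P1.arg + (conj P2).arg ∈ Set.Ioc (-Real.pi) Real.pi := by
      rw [hc2]
      constructor
      · rcases lt_or_ge (-Real.pi) (P1.arg + -P2.arg) with h | h
        · exact h
        · exfalso
          have e1' : P1.arg = -(Real.pi / 2) := by linarith
          have e2' : P2.arg = Real.pi / 2 := by linarith
          exact hstrict ⟨hr0 P1 hP1ne hre1 (by rw [e1', abs_neg, _root_.abs_of_nonneg (by positivity)]),
            hr0 P2 hP2ne hre2 (by rw [e2', _root_.abs_of_nonneg (by positivity)])⟩
      · linarith
    have hmul : (P1 * conj P2).arg = P1.arg + (conj P2).arg :=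
      Complex.arg_mul hP1ne hcne hsum
    rw [hc2] at hmul
    have hA1 : cartan z4 z3 z2 = P1.arg := by rw [cartan, hP1]
    have hA2 : cartan z3 z2 z1 = P2.arg := by rw [cartan, hP2]
    rw [hA1, hA2, sub_eq_add_neg, ← hmul, ← id2, Complex.arg_real_mul _ hρ2]
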